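/- arXiv:1303.4905 — 4 statements merged into one kernel-verified Lean document; each statement's English description precedes it below -/
import Mathlib

section
/- For any directed graph G = (V_G, E_G) and any subset N ⊆ V_G, there exists a map M = (N, E_M) of G (i.e., E_M only contains pairs (x,y) with x,y ∈ N such that there is a path from x to y in G) that is good: M is complete, route-complete, and non-redundant. -/
/-- A nonempty directed path from `u` to `v` in the graph with edge relation `E`,
all of whose intermediate nodes avoid the set `N`. -/
inductive AvoidPath {V : Type*} (E : V → V → Prop) (N : Set V) : V → V → Prop
  | single {u v : V} : E u v → AvoidPath E N u v
  | cons {u w v : V} : E u w → w ∉ N → AvoidPath E N w v → AvoidPath E N u v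

/-- Edges of the good map of `(V, E)` over the distinguished node set `N`:
exactly the pairs `x, y ∈ N` with `x ↠_N y` in `G`. -/
def goodMapEdges {V : Type*} (E : V → V → Prop) (N : Set V) : V → V → Prop :=
  fun x y => x ∈ N ∧ y ∈ N ∧ AvoidPath E N x y

/-- The good map of `(V, E)` over `N`, as a pair (vertex set, edge relation). -/
def goodMap {V : Type*} (E : V → V → Prop) (N : Set V) : Set V × (V → V → Prop) :=
  (N, goodMapEdges E N)

/-- `M = (VM, EM)` is a map of `(V, E)`: its vertices lie in `V`, and every edge
`(x, y)` of `M` joins vertices of `M` connected by a directed path in `G`. -/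
def IsMap {V : Type*} (E : V → V → Prop) (VM : Set V) (EM : V → V → Prop) : Prop :=
  ∀ x y, EM x y → x ∈ VM ∧ y ∈ VM ∧ Relation.TransGen E x y

/-- `M` is complete: paths between map nodes in `G` imply paths in `M`. -/
def MapComplete {V : Type*} (E : V → V → Prop) (VM : Set V) (EM : V → V → Prop) : Prop :=
  ∀ x y, x ∈ VM → y ∈ VM → Relation.TransGen E x y → Relation.TransGen EM x y

/-- `M` is route-complete: `x ↠_{V_M} y` in `G` implies edge `(x,y)` in `M`. -/
def RouteComplete {V : Type*} (E : V → V → Prop) (VM : Set V) (EM : V → V → Prop) : Prop :=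
  ∀ x y, x ∈ VM → y ∈ VM → AvoidPath E VM x y → EM x y

/-- `M` is non-redundant: edge `(x,y)` in `M` implies `x ↠_{V_M} y` in `G`. -/
def NonRedundant {V : Type*} (E : V → V → Prop) (VM : Set V) (EM : V → V → Prop) : Prop :=
  ∀ x y, x ∈ VM → y ∈ VM → EM x y → AvoidPath E VM x y

/-- `M` is a good map: a map that is complete, route-complete and non-redundant. -/
def GoodMap {V : Type*} (E : V → V → Prop) (VM : Set V) (EM : V → V → Prop) : Prop :=
  IsMap E VM EM ∧ MapComplete E VM EM ∧ RouteComplete E VM EM ∧ NonRedundant E VM EM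


lemma avoidPath_transGen {V : Type*} {E : V → V → Prop} {N : Set V} {u v : V}
    (h : AvoidPath E N u v) : Relation.TransGen E u v := by
  induction h with
  | single e => exact Relation.TransGen.single e
  | cons e _ _ ih => exact Relation.TransGen.head e ih

lemma decompose {V : Type*} {E : V → V → Prop} {N : Set V} {u v : V}
    (h : Relation.TransGen E u v) (hv : v ∈ N) :
    AvoidPath E N u v ∨ ∃ w ∈ N, AvoidPath E N u w ∧
      Relation.TransGen (goodMapEdges E N) w v := by
  induction h using Relation.TransGen.head_induction_on with
  | single e => exact Or.inl (AvoidPath.single e)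
  | head e ht ih =>
    rename_i u w
    by_cases hw : w ∈ N
    · refine Or.inr ⟨w, hw, AvoidPath.single e, ?_⟩
      rcases ih with hp | ⟨z, hz, hp, htz⟩
      · exact Relation.TransGen.single ⟨hw, hv, hp⟩
      · exact Relation.TransGen.head ⟨hw, hz, hp⟩ htz
    · rcases ih with hp | ⟨z, hz, hp, htz⟩
      · exact Or.inl (AvoidPath.cons e hw hp)
      · exact Or.inr ⟨z, hz, AvoidPath.cons e hw hp, htz⟩

theorem exists_good_map (V : Type*) (E : V → V → Prop) (N : Set V) :
    ∃ EM : V → V → Prop, GoodMap E N EM := by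
  refine ⟨goodMapEdges E N, ?_, ?_, ?_, ?_⟩
  · exact fun x y ⟨hx, hy, hp⟩ => ⟨hx, hy, avoidPath_transGen hp⟩
  · intro x y hx hy ht
    rcases decompose ht hy with hp | ⟨w, hw, hp, htz⟩
    · exact Relation.TransGen.single ⟨hx, hy, hp⟩
    · exact Relation.TransGen.head ⟨hx, hw, hp⟩ htz
  · exact fun x y hx hy hp => ⟨hx, hy, hp⟩
  · exact fun x y _ _ h => h.2.2
end

section
/- A map M = (V_M, E_M) of a directed graph G is good if and only if for all x,y ∈ V_M: (x,y) ∈ E_M ⟺ x ↠_{V_M} y in G (i.e., the edges of M are exactly the pairs connected in G by a path avoiding intermediate nodes of V_M). -/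
private lemma transGen_decompose {V : Type*} (E : V → V → Prop) (VM : Set V)
    {x y : V} (hy : y ∈ VM) (h : Relation.TransGen E x y) :
    AvoidPath E VM x y ∨
      ∃ w ∈ VM, AvoidPath E VM x w ∧ Relation.TransGen (goodMapEdges E VM) w y := by
  induction h using Relation.TransGen.head_induction_on with
  | single hxy => exact Or.inl (AvoidPath.single hxy)
  | head hxw _hwy ih =>
    rename_i x w
    by_cases hw : w ∈ VM
    · rcases ih with hp | ⟨u, hu, hp, ht⟩
      · exact Or.inr ⟨w, hw, AvoidPath.single hxw,
          Relation.TransGen.single ⟨hw, hy, hp⟩⟩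
      · exact Or.inr ⟨w, hw, AvoidPath.single hxw,
          Relation.TransGen.head ⟨hw, hu, hp⟩ ht⟩
    · rcases ih with hp | ⟨u, hu, hp, ht⟩
      · exact Or.inl (AvoidPath.cons hxw hw hp)
      · exact Or.inr ⟨u, hu, AvoidPath.cons hxw hw hp, ht⟩

theorem good_iff_edges_eq_avoidPaths (V : Type*) (E : V → V → Prop)
    (VM : Set V) (EM : V → V → Prop) (hM : IsMap E VM EM) :
    GoodMap E VM EM ↔ ∀ x y, x ∈ VM → y ∈ VM → (EM x y ↔ AvoidPath E VM x y) := by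
  constructor
  · rintro ⟨_, _, hrc, hnr⟩ x y hx hy
    exact ⟨hnr x y hx hy, hrc x y hx hy⟩
  · intro h
    refine ⟨hM, ?_, fun x y hx hy hp => (h x y hx hy).2 hp,
      fun x y hx hy he => (h x y hx hy).1 he⟩
    intro x y hx hy ht
    have key : ∀ a b, goodMapEdges E VM a b → EM a b := by
      rintro a b ⟨ha, hb, hp⟩
      exact (h a b ha hb).2 hp
    rcases transGen_decompose E VM hy ht with hp | ⟨w, hw, hp, htw⟩
    · exact Relation.TransGen.single ((h x y hx hy).2 hp)
    · exact Relation.TransGen.head ((h x w hx hw).2 hp) (Relation.TransGen.mono key w y htw)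
end

section
/- Let M₁ and M₂ be good maps of a directed graph G. Then the good map M₁ ⊓ M₂ of G over V_{M₁} ∩ V_{M₂} equals (V_{M₁} ∩ V_{M₂})*_{M₁} ∪ (V_{M₁} ∩ V_{M₂})*_{M₂}, where for a graph H and S ⊆ V_H, S*_H denotes the graph (S, {(x,y) : x ↠_S y in H}). In particular M₁ ⊓ M₂ can be computed from M₁ and M₂ alone, without access to G. -/
lemma AvoidPath.snoc {V : Type*} {E : V → V → Prop} {N : Set V} {a x w : V}
    (p : AvoidPath E N a x) (hx : x ∉ N) (e : E x w) : AvoidPath E N a w := by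
  induction p with
  | single e' => exact .cons e' hx (.single e)
  | cons e' h _ ih => exact .cons e' h (ih hx e)

lemma AvoidPath.mono {V : Type*} {E : V → V → Prop} {S N : Set V} (hSN : S ⊆ N)
    {x y : V} (p : AvoidPath E N x y) : AvoidPath E S x y := by
  induction p with
  | single e => exact .single e
  | cons e h _ ih => exact .cons e (fun hs => h (hSN hs)) ih

lemma AvoidPath.trans {V : Type*} {E : V → V → Prop} {S : Set V} {x w y : V}
    (p : AvoidPath E S x w) (hw : w ∉ S) (q : AvoidPath E S w y) : AvoidPath E S x y := by
  induction p with
  | single e => exact .cons e hw q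
  | cons e h _ ih => exact .cons e h (ih hw q)

lemma avoidPath_lift {V : Type*} {E : V → V → Prop} {S N : Set V} (hSN : S ⊆ N)
    {x y : V} (p : AvoidPath E S x y) (hy : y ∈ N) :
    (x ∈ N → AvoidPath (goodMapEdges E N) S x y) ∧
    (∀ a, a ∈ N → AvoidPath E N a x → x ∉ N → AvoidPath (goodMapEdges E N) S a y) := by
  induction p with
  | @single x y e =>
    constructor
    · intro hx; exact .single ⟨hx, hy, .single e⟩
    · intro a ha pre hx; exact .single ⟨ha, hy, pre.snoc hx e⟩
  | @cons x w y e hw p ih =>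
    constructor
    · intro hx
      by_cases hwN : w ∈ N
      · exact .cons ⟨hx, hwN, .single e⟩ hw ((ih hy).1 hwN)
      · exact (ih hy).2 x hx (.single e) hwN
    · intro a ha pre hx
      by_cases hwN : w ∈ N
      · exact .cons ⟨ha, hwN, pre.snoc hx e⟩ hw ((ih hy).1 hwN)
      · exact (ih hy).2 a ha (pre.snoc hx e) hwN

lemma avoidPath_descend {V : Type*} {E : V → V → Prop} {S N : Set V} (hSN : S ⊆ N)
    {x y : V} (p : AvoidPath (goodMapEdges E N) S x y) : AvoidPath E S x y := by
  induction p with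
  | single e => exact e.2.2.mono hSN
  | cons e hw _ ih => exact (e.2.2.mono hSN).trans hw ih

theorem inf_goodMap_from_maps (V : Type*) (E : V → V → Prop) (N₁ N₂ : Set V) :
    goodMapEdges E (N₁ ∩ N₂) =
      fun x y => goodMapEdges (goodMapEdges E N₁) (N₁ ∩ N₂) x y ∨
                 goodMapEdges (goodMapEdges E N₂) (N₁ ∩ N₂) x y := by
  funext x y
  apply propext
  constructor
  · rintro ⟨hx, hy, p⟩
    exact Or.inl ⟨hx, hy, (avoidPath_lift Set.inter_subset_left p hy.1).1 hx.1⟩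
  · rintro (⟨hx, hy, p⟩ | ⟨hx, hy, p⟩)
    · exact ⟨hx, hy, avoidPath_descend Set.inter_subset_left p⟩
    · exact ⟨hx, hy, avoidPath_descend Set.inter_subset_right p⟩
end

section
/- Let G be a directed graph and M the good map of G over N ⊆ V_G. Then for all x,y ∈ N, there is a directed path from x to y in M if and only if there is a directed path from x to y in G (good maps exactly preserve reachability among distinguished nodes). -/
lemma AvoidPath.toTransGen {V : Type*} {E : V → V → Prop} {N : Set V} {x y : V}
    (h : AvoidPath E N x y) : Relation.TransGen E x y := by
  induction h with
  | single h => exact Relation.TransGen.single h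
  | cons h _ _ ih => exact Relation.TransGen.head h ih

lemma transGen_split {V : Type*} {E : V → V → Prop} {N : Set V} {x y : V}
    (h : Relation.TransGen E x y) (hy : y ∈ N) :
    ∃ w ∈ N, AvoidPath E N x w ∧ (w = y ∨ Relation.TransGen (goodMapEdges E N) w y) := by
  induction h using Relation.TransGen.head_induction_on with
  | single h => exact ⟨y, hy, AvoidPath.single h, Or.inl rfl⟩
  | head h _ ih =>
    rename_i a _
    obtain ⟨w, hw, hp, hrest⟩ := ih
    by_cases ha : a ∈ N
    · refine ⟨a, ha, AvoidPath.single h, Or.inr ?_⟩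
      have e : Relation.TransGen (goodMapEdges E N) a w :=
        Relation.TransGen.single ⟨ha, hw, hp⟩
      rcases hrest with rfl | hr
      · exact e
      · exact e.trans hr
    · exact ⟨w, hw, AvoidPath.cons h ha hp, hrest⟩

theorem goodMap_preserves_reachability (V : Type*) (E : V → V → Prop) (N : Set V) :
    ∀ x y, x ∈ N → y ∈ N →
      (Relation.TransGen (goodMapEdges E N) x y ↔ Relation.TransGen E x y) := by
  intro x y hx hy
  constructor
  · intro h
    clear hx hy
    induction h with
    | single h => exact h.2.2.toTransGen
    | tail _ h ih => exact ih.trans h.2.2.toTransGen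
  · intro h
    obtain ⟨w, hw, hp, hrest⟩ := transGen_split h hy
    have e : Relation.TransGen (goodMapEdges E N) x w :=
      Relation.TransGen.single ⟨hx, hw, hp⟩
    rcases hrest with rfl | hr
    · exact e
    · exact e.trans hr
end
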